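/- Let D₁, D₂, D₃ be three pairwise tangent closed disks of equal radius in ℝ² (each pair touching in exactly one point), and let the three points of pairwise tangency be q₁₂, q₁₃, q₂₃. Then D₁ ∩ D₂ ∩ D₃ = ∅, and any point set stabbing {D₁, D₂, D₃} has at least two points; moreover, a two-point set stabs {D₁, D₂, D₃} only if at least one of its points is one of the tangency points q₁₂, q₁₃, q₂₃. -/
import Mathlib

private lemma tang_pt {E : Type*} [NormedAddCommGroup E] [NormedSpace ℝ E] [StrictConvexSpace ℝ E]
    {a b x : E} {ρ : ℝ} (hab : dist a b = 2 * ρ)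
    (hx1 : dist x a ≤ ρ) (hx2 : dist x b ≤ ρ) : x = midpoint ℝ a b := by
  have ht := dist_triangle a x b
  rw [dist_comm a x] at ht
  have h1 : dist a x = ρ := by rw [dist_comm]; linarith
  have h2 : dist x b = ρ := by linarith
  exact eq_midpoint_of_dist_eq_half (by rw [h1, hab]; ring) (by rw [h2, hab]; ring)

theorem stab_three_tangent_disks
    (c₁ c₂ c₃ : EuclideanSpace ℝ (Fin 2)) (ρ : ℝ) (hρ : 0 < ρ)
    (h12 : dist c₁ c₂ = 2 * ρ) (h13 : dist c₁ c₃ = 2 * ρ) (h23 : dist c₂ c₃ = 2 * ρ) :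
    (Metric.closedBall c₁ ρ ∩ Metric.closedBall c₂ ρ ∩ Metric.closedBall c₃ ρ = ∅)
    ∧ (∀ P : Set (EuclideanSpace ℝ (Fin 2)),
        (P ∩ Metric.closedBall c₁ ρ).Nonempty →
        (P ∩ Metric.closedBall c₂ ρ).Nonempty →
        (P ∩ Metric.closedBall c₃ ρ).Nonempty →
        2 ≤ P.encard)
    ∧ (∀ P : Set (EuclideanSpace ℝ (Fin 2)), P.encard = 2 →
        (P ∩ Metric.closedBall c₁ ρ).Nonempty →
        (P ∩ Metric.closedBall c₂ ρ).Nonempty →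
        (P ∩ Metric.closedBall c₃ ρ).Nonempty →
        ∃ p ∈ P, p = midpoint ℝ c₁ c₂ ∨ p = midpoint ℝ c₁ c₃ ∨ p = midpoint ℝ c₂ c₃) := by
  have hempty : Metric.closedBall c₁ ρ ∩ Metric.closedBall c₂ ρ ∩ Metric.closedBall c₃ ρ = ∅ := by
    ext x
    simp only [Set.mem_inter_iff, Metric.mem_closedBall, Set.mem_empty_iff_false, iff_false]
    rintro ⟨⟨hx1, hx2⟩, hx3⟩
    have e12 : x = midpoint ℝ c₁ c₂ := tang_pt h12 hx1 hx2
    have e13 : x = midpoint ℝ c₁ c₃ := tang_pt h13 hx1 hx3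
    have hm : midpoint ℝ c₁ c₂ = midpoint ℝ c₁ c₃ := e12.symm.trans e13
    rw [midpoint_eq_smul_add, midpoint_eq_smul_add] at hm
    have h23' : c₂ = c₃ := by
      have := smul_right_injective (EuclideanSpace ℝ (Fin 2))
        (by norm_num : ((2:ℝ)⁻¹) ≠ 0) hm
      exact add_left_cancel this
    rw [h23'] at h23
    simp at h23
    linarith
  have hnot3 : ∀ w : EuclideanSpace ℝ (Fin 2),
      dist w c₁ ≤ ρ → dist w c₂ ≤ ρ → dist w c₃ ≤ ρ → False := by
    intro w w1 w2 w3
    have : w ∈ (∅ : Set (EuclideanSpace ℝ (Fin 2))) := by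
      rw [← hempty]; exact ⟨⟨w1, w2⟩, w3⟩
    exact this
  refine ⟨hempty, ?_, ?_⟩
  · rintro P ⟨x, hxP, hx1⟩ ⟨y, hyP, hy2⟩ ⟨z, hzP, hz3⟩
    rw [Metric.mem_closedBall] at hx1 hy2 hz3
    have hne : x ≠ y ∨ x ≠ z := by
      by_contra h
      push_neg at h
      exact hnot3 x hx1 (h.1 ▸ hy2) (h.2 ▸ hz3)
    have hlt : 1 < P.encard := by
      rcases hne with h | h
      · exact Set.one_lt_encard_iff.2 ⟨x, y, hxP, hyP, h⟩
      · exact Set.one_lt_encard_iff.2 ⟨x, z, hxP, hzP, h⟩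
    exact Order.add_one_le_of_lt hlt
  · rintro P hP ⟨x, hxP, hx1⟩ ⟨y, hyP, hy2⟩ ⟨z, hzP, hz3⟩
    rw [Metric.mem_closedBall] at hx1 hy2 hz3
    obtain ⟨a, b, hab, rfl⟩ := Set.encard_eq_two.mp hP
    have ha : a ∈ ({a, b} : Set _) := by simp
    have hb : b ∈ ({a, b} : Set _) := by simp
    simp only [Set.mem_insert_iff, Set.mem_singleton_iff] at hxP hyP hzP
    rcases hxP with hx | hx <;> rcases hyP with hy | hy <;> rcases hzP with hz | hz
    · exact ⟨a, ha, Or.inl (tang_pt h12 (hx ▸ hx1) (hy ▸ hy2))⟩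
    · exact ⟨a, ha, Or.inl (tang_pt h12 (hx ▸ hx1) (hy ▸ hy2))⟩
    · exact ⟨a, ha, Or.inr (Or.inl (tang_pt h13 (hx ▸ hx1) (hz ▸ hz3)))⟩
    · exact ⟨b, hb, Or.inr (Or.inr (tang_pt h23 (hy ▸ hy2) (hz ▸ hz3)))⟩
    · exact ⟨a, ha, Or.inr (Or.inr (tang_pt h23 (hy ▸ hy2) (hz ▸ hz3)))⟩
    · exact ⟨b, hb, Or.inr (Or.inl (tang_pt h13 (hx ▸ hx1) (hz ▸ hz3)))⟩
    · exact ⟨b, hb, Or.inl (tang_pt h12 (hx ▸ hx1) (hy ▸ hy2))⟩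
    · exact ⟨b, hb, Or.inl (tang_pt h12 (hx ▸ hx1) (hy ▸ hy2))⟩
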